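/- For every s ∈ (0,1) there exist u ∈ (0,1/4) and a function m : [0,∞) → ℝ solving the initial value problem m″(r) + (1/(4(r+1)²) − u)·m(r) = 0, m(0) = 0, m′(0) = 1, such that m′(z_u) = s, where z_u = 1/(2√u) − 1 is the unique nonnegative zero of r ↦ 1/(4(r+1)²) − u. -/

import Mathlib

open Real Set Filter MeasureTheory

namespace VM


/-- shifted coefficients: derivative series -/
noncomputable def pc (c : ℕ → ℝ) : ℕ → ℝ := fun k => ((k:ℝ)+1) * c (k+1)

/-- power series sum -/
noncomputable def ps (c : ℕ → ℝ) (w : ℝ) : ℝ := ∑' k, c k * w ^ k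

structure Bd (c : ℕ → ℝ) (M : ℝ) : Prop where
  bd : ∀ k, |c k| ≤ M / (Nat.factorial k)

theorem Bd.shift {c M} (h : Bd c M) : Bd (pc c) M := by
  constructor
  intro k
  have h1 := h.bd (k+1)
  have hk : (0:ℝ) < (k:ℝ)+1 := by positivity
  have h2 : (Nat.factorial k : ℝ) ≠ 0 := Nat.cast_ne_zero.mpr (Nat.factorial_ne_zero k)
  calc |VM.pc c k| = ((k:ℝ)+1) * |c (k+1)| := by
        rw [VM.pc, abs_mul, abs_of_pos hk]
    _ ≤ ((k:ℝ)+1) * (M / (Nat.factorial (k+1))) := by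
        exact mul_le_mul_of_nonneg_left h1 (le_of_lt hk)
    _ = M / (Nat.factorial k) := by
        rw [Nat.factorial_succ]; push_cast; field_simp

theorem Bd.summable {c M} (h : Bd c M) (w : ℝ) :
    Summable (fun k => c k * w ^ k) := by
  apply Summable.of_norm_bounded (g := fun k => M * (|w| ^ k / (Nat.factorial k)))
    ((Real.summable_pow_div_factorial |w|).mul_left M)
  intro k
  rw [norm_mul, norm_pow, Real.norm_eq_abs, Real.norm_eq_abs]
  calc |c k| * |w| ^ k ≤ (M / (Nat.factorial k)) * |w| ^ k := by
        exact mul_le_mul_of_nonneg_right (h.bd k) (by positivity)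
    _ = M * (|w| ^ k / (Nat.factorial k)) := by ring

theorem Bd.hasDerivAt {c M} (h : Bd c M) (w : ℝ) :
    HasDerivAt (ps c) (ps (pc c) w) w := by
  set R : ℝ := |w| + 1 with hR
  have hwR : w ∈ Ioo (-R) R := by
    constructor <;> [nlinarith [abs_nonneg w, neg_abs_le w]; nlinarith [le_abs_self w]]
  have hu : Summable (fun (k : ℕ) => M * ((k:ℝ) * R ^ (k-1) / (Nat.factorial k))) := by
    rw [← summable_nat_add_iff 1]
    have heq : (fun (k:ℕ) => M * (((k+1:ℕ):ℝ) * R ^ ((k+1)-1) / (Nat.factorial (k+1))))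
        = fun (k:ℕ) => M * (R ^ k / (Nat.factorial k)) := by
      funext k
      rw [Nat.add_sub_cancel, Nat.factorial_succ]
      have h1 : ((k:ℝ)+1) ≠ 0 := by positivity
      have h2 : (Nat.factorial k : ℝ) ≠ 0 := Nat.cast_ne_zero.mpr (Nat.factorial_ne_zero k)
      push_cast
      field_simp
    rw [heq]
    exact (Real.summable_pow_div_factorial R).mul_left M
  have hbound : ∀ (n : ℕ) (y : ℝ), y ∈ Ioo (-R) R →
      ‖c n * ((n:ℝ) * y ^ (n-1))‖ ≤ M * ((n:ℝ) * R ^ (n-1) / (Nat.factorial n)) := by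
    intro n y hy
    have hRpos : (0:ℝ) < R := by positivity
    have hyR : |y| ≤ R := by
      rw [abs_le]; exact ⟨le_of_lt hy.1, le_of_lt hy.2⟩
    have h2 : (0:ℝ) < (Nat.factorial n : ℝ) := by positivity
    rw [Real.norm_eq_abs, abs_mul, abs_mul, abs_of_nonneg (by positivity : (0:ℝ) ≤ (n:ℝ)),
      abs_pow]
    have hb := h.bd n
    have hyn : |y| ^ (n-1) ≤ R ^ (n-1) := pow_le_pow_left₀ (abs_nonneg y) hyR _
    calc |c n| * ((n:ℝ) * |y| ^ (n-1)) ≤ (M / (Nat.factorial n)) * ((n:ℝ) * R ^ (n-1)) := by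
          apply mul_le_mul hb ?_ (by positivity) ?_
          · exact mul_le_mul_of_nonneg_left hyn (by positivity)
          · calc (0:ℝ) ≤ |c n| := abs_nonneg _
              _ ≤ M / (Nat.factorial n) := hb
      _ = M * ((n:ℝ) * R ^ (n-1) / (Nat.factorial n)) := by
          field_simp
  have key : HasDerivAt (fun z => ∑' k, c k * z ^ k)
      (∑' k, c k * ((k:ℝ) * w ^ (k-1))) w := by
    apply hasDerivAt_tsum_of_isPreconnected
      (g := fun (n : ℕ) (y : ℝ) => c n * y ^ n)
      (g' := fun (n : ℕ) (y : ℝ) => c n * ((n:ℝ) * y ^ (n-1)))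
      hu isOpen_Ioo (isPreconnected_Ioo) ?_ hbound hwR (h.summable w) hwR
    intro n y _
    exact (hasDerivAt_pow n y).const_mul (c n)
  have hval : (∑' k, c k * ((k:ℝ) * w ^ (k-1))) = ps (pc c) w := by
    have hs1 : Summable (fun k => c k * ((k:ℝ) * w ^ (k-1))) :=
      Summable.of_norm_bounded hu (fun n => hbound n w hwR)
    rw [Summable.tsum_eq_zero_add hs1]
    simp only [Nat.cast_zero, zero_mul, mul_zero, zero_add]
    rw [ps]
    apply tsum_congr
    intro k
    rw [Nat.add_sub_cancel, VM.pc]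
    push_cast
    ring
  rw [← hval]
  exact key



noncomputable def ac : ℕ → ℝ := fun k => 1 / ((Nat.factorial k : ℝ))^2
noncomputable def Hn : ℕ → ℝ := fun k => ∑ i ∈ Finset.range k, 1/((i:ℝ)+1)
noncomputable def bc : ℕ → ℝ := fun k => -2 * Hn k / ((Nat.factorial k : ℝ))^2

theorem fact_ne (k : ℕ) : ((Nat.factorial k : ℝ)) ≠ 0 :=
  Nat.cast_ne_zero.mpr (Nat.factorial_ne_zero k)

theorem ac_bd : Bd ac 1 := by
  constructor
  intro k
  have h1 : (1:ℝ) ≤ (Nat.factorial k : ℝ) := by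
    exact_mod_cast Nat.one_le_iff_ne_zero.mpr (Nat.factorial_ne_zero k)
  rw [ac, abs_of_pos (by positivity)]
  rw [div_le_div_iff₀ (by positivity) (by positivity)]
  nlinarith

theorem bc_bd : Bd bc 2 := by
  constructor
  intro k
  have h1 : (1:ℝ) ≤ (Nat.factorial k : ℝ) := by
    exact_mod_cast Nat.one_le_iff_ne_zero.mpr (Nat.factorial_ne_zero k)
  have h2 : Hn k ≤ (Nat.factorial k : ℝ) := by
    calc Hn k ≤ ∑ i ∈ Finset.range k, (1:ℝ) := by
          apply Finset.sum_le_sum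
          intro i _
          rw [div_le_one (by positivity)]
          linarith [Nat.cast_nonneg (α := ℝ) i]
      _ = (k : ℝ) := by simp
      _ ≤ (Nat.factorial k : ℝ) := by exact_mod_cast Nat.self_le_factorial k
  have h3 : 0 ≤ Hn k := Finset.sum_nonneg (fun i _ => by positivity)
  rw [bc, abs_div, abs_of_pos (by positivity : (0:ℝ) < ((Nat.factorial k:ℝ))^2)]
  rw [div_le_div_iff₀ (by positivity) (by positivity)]
  have : |(-2 : ℝ) * Hn k| = 2 * Hn k := by
    rw [abs_mul]; simp [abs_of_nonneg h3]
  rw [this]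
  nlinarith

theorem ac_rec (k : ℕ) : ((k:ℝ)+1)^2 * ac (k+1) - ac k = 0 := by
  rw [ac, ac, Nat.factorial_succ]
  have := fact_ne k
  push_cast
  field_simp
  ring

theorem bc_rec (k : ℕ) : ((k:ℝ)+1)^2 * bc (k+1) - bc k = -(2 * pc ac k) := by
  rw [bc, bc, pc, ac, Nat.factorial_succ, Hn, Hn, Finset.sum_range_succ]
  have := fact_ne k
  have hk1 : ((k:ℝ)+1) ≠ 0 := by positivity
  push_cast
  field_simp
  ring

set_option maxHeartbeats 2000000 in
theorem ode_ps {c e : ℕ → ℝ} {Mc Me : ℝ} (hc : Bd c Mc) (he : Bd e Me)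
    (hrec : ∀ k : ℕ, ((k:ℝ)+1)^2 * c (k+1) - c k = -(e k)) (w : ℝ) :
    w * ps (pc (pc c)) w + ps (pc c) w - ps c w + ps e w = 0 := by
  have hA : Summable (fun k => pc (pc c) k * w^(k+1)) := by
    have := (hc.shift.shift.summable w).mul_right w
    apply this.congr
    intro k
    ring
  have hB : Summable (fun k => pc c (k+1) * w^(k+1)) :=
    (summable_nat_add_iff 1).2 (hc.shift.summable w)
  have hC : Summable (fun k => c (k+1) * w^(k+1)) :=
    (summable_nat_add_iff 1).2 (hc.summable w)
  have hD : Summable (fun k => e (k+1) * w^(k+1)) :=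
    (summable_nat_add_iff 1).2 (he.summable w)
  have h1 : w * ps (pc (pc c)) w = ∑' k, pc (pc c) k * w^(k+1) := by
    rw [ps, ← tsum_mul_left]
    exact tsum_congr fun k => by ring
  have h2 : ps (pc c) w = pc c 0 + ∑' k, pc c (k+1) * w^(k+1) := by
    rw [ps, Summable.tsum_eq_zero_add (hc.shift.summable w)]
    simp
  have h3 : ps c w = c 0 + ∑' k, c (k+1) * w^(k+1) := by
    rw [ps, Summable.tsum_eq_zero_add (hc.summable w)]
    simp
  have h4 : ps e w = e 0 + ∑' k, e (k+1) * w^(k+1) := by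
    rw [ps, Summable.tsum_eq_zero_add (he.summable w)]
    simp
  rw [h1, h2, h3, h4]
  have key : (∑' k, pc (pc c) k * w^(k+1)) + (∑' k, pc c (k+1) * w^(k+1))
      - (∑' k, c (k+1) * w^(k+1)) + (∑' k, e (k+1) * w^(k+1)) = 0 := by
    rw [← Summable.tsum_add hA hB, ← Summable.tsum_sub (hA.add hB) hC, ← Summable.tsum_add ((hA.add hB).sub hC) hD]
    rw [show (0:ℝ) = ∑' (_ : ℕ), (0:ℝ) from tsum_zero.symm]
    apply tsum_congr
    intro k
    have h := hrec (k+1)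
    push_cast at h
    simp only [pc]
    push_cast
    linear_combination w^(k+1) * h
  have h0 := hrec 0
  have hpc0 : pc c 0 = c 1 := by simp [pc]
  push_cast at h0
  linear_combination key + h0 + hpc0

theorem ps_zero (c : ℕ → ℝ) : ps c 0 = c 0 := by
  rw [ps]
  rw [tsum_eq_single 0]
  · simp
  · intro k hk
    simp [zero_pow hk]

noncomputable def ff := ps ac
noncomputable def fd := ps (pc ac)
noncomputable def fdd := ps (pc (pc ac))
noncomputable def hh := ps bc
noncomputable def hd := ps (pc bc)
noncomputable def hdd := ps (pc (pc bc))

theorem ff_hasDerivAt (w : ℝ) : HasDerivAt ff (fd w) w := ac_bd.hasDerivAt w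
theorem fd_hasDerivAt (w : ℝ) : HasDerivAt fd (fdd w) w := ac_bd.shift.hasDerivAt w
theorem hh_hasDerivAt (w : ℝ) : HasDerivAt hh (hd w) w := bc_bd.hasDerivAt w
theorem hd_hasDerivAt (w : ℝ) : HasDerivAt hd (hdd w) w := bc_bd.shift.hasDerivAt w

theorem ff_ode (w : ℝ) : w * fdd w + fd w - ff w = 0 := by
  have := ode_ps ac_bd (Bd.mk (c := fun _ => (0:ℝ)) (M := 1) (fun k => by simp only [abs_zero]; positivity))
    (fun k => by rw [ac_rec k]; simp) w
  have hz : ps (fun _ => (0:ℝ)) w = 0 := by simp [ps]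
  rw [hz] at this
  simpa [ff, fd, fdd] using this

theorem hh_ode (w : ℝ) : w * hdd w + hd w - hh w + 2 * fd w = 0 := by
  have h2 : Bd (fun k => 2 * pc ac k) 2 := by
    constructor
    intro k
    have := (ac_bd.shift).bd k
    rw [abs_mul, abs_of_pos (by norm_num : (0:ℝ) < 2)]
    calc 2 * |pc ac k| ≤ 2 * (1 / (Nat.factorial k)) := by linarith
      _ = 2 / (Nat.factorial k) := by ring
  have := ode_ps bc_bd h2 (fun k => bc_rec k) w
  have h3 : ps (fun k => 2 * pc ac k) w = 2 * fd w := by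
    rw [ps, fd, ps, ← tsum_mul_left]
    exact tsum_congr fun k => by ring
  rw [h3] at this
  exact this

theorem ff_zero : ff 0 = 1 := by
  rw [ff, ps_zero]; simp [ac]
theorem hh_zero : hh 0 = 0 := by
  rw [hh, ps_zero]; simp [bc, Hn]

noncomputable def phi (w : ℝ) : ℝ := ff w ^ 2 + w * (ff w * hd w - fd w * hh w)

theorem phi_hasDerivAt (w : ℝ) : HasDerivAt phi 0 w := by
  have h := (((ff_hasDerivAt w).pow 2).add
    ((hasDerivAt_id w).mul (((ff_hasDerivAt w).mul (hd_hasDerivAt w)).sub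
      ((fd_hasDerivAt w).mul (hh_hasDerivAt w)))))
  refine h.congr_deriv (Eq.symm ?_)
  have h1 := ff_ode w
  have h2 := hh_ode w
  simp only [id, Pi.sub_apply, Pi.mul_apply]
  linear_combination (hh w) * h1 - (ff w) * h2



theorem phi_eq_one (w : ℝ) : phi w = 1 := by
  have h := is_const_of_deriv_eq_zero (f := phi)
    (fun x => (phi_hasDerivAt x).differentiableAt)
    (fun x => (phi_hasDerivAt x).deriv) w 0
  rw [h, phi, ff_zero, hh_zero]
  ring

theorem ff_contDiff : ContDiff ℝ 2 ff := by
  have e1 : deriv ff = fd := funext fun w => (ff_hasDerivAt w).deriv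
  have e2 : deriv fd = fdd := funext fun w => (fd_hasDerivAt w).deriv
  have h2 : (2 : WithTop ℕ∞) = 1 + 1 := by norm_num
  rw [h2, contDiff_succ_iff_deriv]
  refine ⟨fun w => (ff_hasDerivAt w).differentiableAt, by simp, ?_⟩
  have h1 : (1 : WithTop ℕ∞) = 0 + 1 := by norm_num
  rw [e1, h1, contDiff_succ_iff_deriv]
  refine ⟨fun w => (fd_hasDerivAt w).differentiableAt, by simp, ?_⟩
  rw [e2, contDiff_zero]
  exact continuous_iff_continuousAt.mpr fun w => ((ac_bd.shift.shift).hasDerivAt w).continuousAt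

theorem hh_contDiff : ContDiff ℝ 2 hh := by
  have e1 : deriv hh = hd := funext fun w => (hh_hasDerivAt w).deriv
  have e2 : deriv hd = hdd := funext fun w => (hd_hasDerivAt w).deriv
  have h2 : (2 : WithTop ℕ∞) = 1 + 1 := by norm_num
  rw [h2, contDiff_succ_iff_deriv]
  refine ⟨fun w => (hh_hasDerivAt w).differentiableAt, by simp, ?_⟩
  have h1 : (1 : WithTop ℕ∞) = 0 + 1 := by norm_num
  rw [e1, h1, contDiff_succ_iff_deriv]
  refine ⟨fun w => (hd_hasDerivAt w).differentiableAt, by simp, ?_⟩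
  rw [e2, contDiff_zero]
  exact continuous_iff_continuousAt.mpr fun w => ((bc_bd.shift.shift).hasDerivAt w).continuousAt

-- value-level defs
noncomputable def F2 (w : ℝ) : ℝ := ff w * Real.log w + hh w
noncomputable def F2d (w : ℝ) : ℝ := fd w * Real.log w + ff w / w + hd w
noncomputable def F2dd (w : ℝ) : ℝ :=
  fdd w * Real.log w + 2 * fd w / w - ff w / w^2 + hdd w
noncomputable def Aa (u : ℝ) : ℝ := -(F2 (u/4)) / 2
noncomputable def Bb (u : ℝ) : ℝ := ff (u/4) / 2
noncomputable def G (u w : ℝ) : ℝ := Aa u * ff w + Bb u * F2 w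
noncomputable def Gd (u w : ℝ) : ℝ := Aa u * fd w + Bb u * F2d w
noncomputable def Gdd (u w : ℝ) : ℝ := Aa u * fdd w + Bb u * F2dd w

theorem F2_hasDerivAt {w : ℝ} (hw : 0 < w) : HasDerivAt F2 (F2d w) w := by
  have h1 := (ff_hasDerivAt w).mul (Real.hasDerivAt_log (ne_of_gt hw))
  have h2 := h1.add (hh_hasDerivAt w)
  exact h2.congr_deriv (by rw [F2d, div_eq_mul_inv])

theorem F2d_hasDerivAt {w : ℝ} (hw : 0 < w) : HasDerivAt F2d (F2dd w) w := by
  have h1 := (fd_hasDerivAt w).mul (Real.hasDerivAt_log (ne_of_gt hw))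
  have h2 := (ff_hasDerivAt w).div (hasDerivAt_id w) (ne_of_gt hw)
  have h3 := (h1.add h2).add (hd_hasDerivAt w)
  refine h3.congr_deriv (Eq.symm ?_)
  simp only [F2dd, id]
  have : w ≠ 0 := ne_of_gt hw
  field_simp
  ring

theorem G_hasDerivAt (u : ℝ) {w : ℝ} (hw : 0 < w) : HasDerivAt (G u) (Gd u w) w :=
  ((ff_hasDerivAt w).const_mul (Aa u)).add ((F2_hasDerivAt hw).const_mul (Bb u))

theorem Gd_hasDerivAt (u : ℝ) {w : ℝ} (hw : 0 < w) : HasDerivAt (Gd u) (Gdd u w) w :=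
  ((fd_hasDerivAt w).const_mul (Aa u)).add ((F2d_hasDerivAt hw).const_mul (Bb u))

theorem G_ode (u : ℝ) {w : ℝ} (hw : 0 < w) :
    w * Gdd u w + Gd u w - G u w = 0 := by
  have h1 := ff_ode w
  have h2 := hh_ode w
  have hne : w ≠ 0 := ne_of_gt hw
  rw [G, Gd, Gdd, F2, F2d, F2dd]
  field_simp
  linear_combination ((Aa u + Bb u * Real.log w) * w) * h1 + (Bb u * w) * h2

theorem G_w0 (u : ℝ) : G u (u/4) = 0 := by
  rw [G, Aa, Bb]; ring

theorem Gd_w0 {u : ℝ} (hu : 0 < u) : Gd u (u/4) = 2/u := by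
  have hp := phi_eq_one (u/4)
  rw [phi] at hp
  have hne : u ≠ 0 := ne_of_gt hu
  rw [Gd, Aa, Bb, F2, F2d]
  field_simp
  linear_combination 4 * hp



noncomputable def tau (r : ℝ) : ℝ :=
  Real.smoothTransition (2*r+2) * (r + 1/2) + 1/2

theorem tau_contDiff : ContDiff ℝ 2 tau := by
  have h1 : ContDiff ℝ 2 (fun r : ℝ => Real.smoothTransition (2*r+2)) := by
    have hst : ContDiff ℝ 2 Real.smoothTransition := by
      exact_mod_cast Real.smoothTransition.contDiff (n := (2:ℕ∞))
    exact hst.comp ((contDiff_const.mul contDiff_id).add contDiff_const)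
  exact (h1.mul (contDiff_id.add contDiff_const)).add contDiff_const

theorem tau_pos (r : ℝ) : 0 < tau r := by
  rcases le_or_gt (r + 1/2) 0 with h | h
  · rcases le_or_gt r (-1) with h1 | h1
    · rw [tau, Real.smoothTransition.zero_of_nonpos (by linarith)]
      norm_num
    · have hle := Real.smoothTransition.le_one (2*r+2)
      have hnn := Real.smoothTransition.nonneg (2*r+2)
      have : Real.smoothTransition (2*r+2) * (r + 1/2) ≥ 1 * (r + 1/2) := by nlinarith
      rw [tau]; nlinarith
  · have hnn := Real.smoothTransition.nonneg (2*r+2)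
    rw [tau]; nlinarith

theorem tau_eq {r : ℝ} (h : -(1:ℝ)/2 < r) : tau r = r + 1 := by
  rw [tau, Real.smoothTransition.one_of_one_le (by linarith)]
  ring

noncomputable def Yf (u t : ℝ) : ℝ := Real.sqrt t * G u (u*t^2/4)
noncomputable def Y1 (u t : ℝ) : ℝ :=
  G u (u*t^2/4) / (2*Real.sqrt t) + Real.sqrt t * Gd u (u*t^2/4) * (u*t/2)

theorem omega_hasDerivAt (u t : ℝ) : HasDerivAt (fun t => u*t^2/4) (u*t/2) t := by
  have h := ((hasDerivAt_pow 2 t).const_mul u).div_const 4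
  refine h.congr_deriv (Eq.symm ?_)
  push_cast
  ring

theorem omega_pos {u t : ℝ} (hu : 0 < u) (ht : 0 < t) : 0 < u*t^2/4 := by positivity

theorem Yf_hasDerivAt {u t : ℝ} (hu : 0 < u) (ht : 0 < t) :
    HasDerivAt (Yf u) (Y1 u t) t := by
  have hs := Real.hasDerivAt_sqrt (ne_of_gt ht)
  have hc := (G_hasDerivAt u (omega_pos hu ht)).comp t (omega_hasDerivAt u t)
  have h := hs.mul hc
  refine h.congr_deriv (Eq.symm ?_)
  rw [Y1]
  simp only [Function.comp_apply]
  ring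

theorem Y1_hasDerivAt {u t : ℝ} (hu : 0 < u) (ht : 0 < t) :
    ∃ y2, HasDerivAt (Y1 u) y2 t ∧ y2 + (1/(4*t^2) - u) * Yf u t = 0 := by
  have hst : Real.sqrt t ≠ 0 := ne_of_gt (Real.sqrt_pos.2 ht)
  have hA : HasDerivAt (fun t : ℝ => 2*Real.sqrt t) (2*(1/(2*Real.sqrt t))) t :=
    (Real.hasDerivAt_sqrt (ne_of_gt ht)).const_mul 2
  have hGc : HasDerivAt (fun t => G u (u*t^2/4)) (Gd u (u*t^2/4) * (u*t/2)) t :=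
    by have := (G_hasDerivAt u (omega_pos hu ht)).comp t (omega_hasDerivAt u t); exact this
  have hGdc : HasDerivAt (fun t => Gd u (u*t^2/4)) (Gdd u (u*t^2/4) * (u*t/2)) t :=
    by have := (Gd_hasDerivAt u (omega_pos hu ht)).comp t (omega_hasDerivAt u t); exact this
  have h2st : (2*Real.sqrt t) ≠ 0 := by positivity
  have hT1 : HasDerivAt (fun t => G u (u*t^2/4) / (2*Real.sqrt t))
      ((Gd u (u*t^2/4) * (u*t/2) * (2*Real.sqrt t) - G u (u*t^2/4) * (2*(1/(2*Real.sqrt t))))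
        / (2*Real.sqrt t)^2) t := hGc.div hA h2st
  have hT2 : HasDerivAt (fun t => Real.sqrt t * Gd u (u*t^2/4) * (u*t/2))
      (((1/(2*Real.sqrt t)) * Gd u (u*t^2/4) + Real.sqrt t * (Gdd u (u*t^2/4) * (u*t/2))) * (u*t/2)
        + Real.sqrt t * Gd u (u*t^2/4) * (u/2)) t := by
    have hm := ((Real.hasDerivAt_sqrt (ne_of_gt ht)).mul hGdc)
    have hlin : HasDerivAt (fun t : ℝ => u*t/2) (u/2) t := by
      have := ((hasDerivAt_id t).const_mul u).div_const 2
      refine this.congr_deriv (Eq.symm ?_)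
      norm_num
    have := hm.mul hlin
    exact this
  refine ⟨_, hT1.add hT2, ?_⟩
  -- now the algebraic identity
  obtain ⟨sq, hsq0, rfl⟩ : ∃ sq : ℝ, 0 < sq ∧ t = sq^2 :=
    ⟨Real.sqrt t, Real.sqrt_pos.2 ht, (Real.sq_sqrt ht.le).symm⟩
  rw [Yf]
  rw [Real.sqrt_sq hsq0.le]
  have hode := G_ode u (omega_pos hu ht)
  have hsqne : sq ≠ 0 := ne_of_gt hsq0
  field_simp
  rw [show (sq^2)^2 = sq^4 by ring] at hode
  linear_combination (16 * u * sq^4) * hode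

noncomputable def mm (u r : ℝ) : ℝ := Real.sqrt (tau r) * G u (u*(tau r)^2/4)

theorem mm_eq {u x : ℝ} (hx : -(1:ℝ)/2 < x) : mm u x = Yf u (x+1) := by
  rw [mm, Yf, tau_eq hx]

theorem mm_eventuallyEq {u r : ℝ} (hr : -(1:ℝ)/2 < r) :
    mm u =ᶠ[nhds r] fun x => Yf u (x+1) := by
  filter_upwards [isOpen_Ioi.mem_nhds (show r ∈ Ioi (-(1:ℝ)/2) from hr)] with x hx
  exact mm_eq hx

theorem mm_hasDerivAt {u r : ℝ} (hu : 0 < u) (hr : -(1:ℝ)/2 < r) :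
    HasDerivAt (mm u) (Y1 u (r+1)) r := by
  have ht : (0:ℝ) < r + 1 := by linarith
  have hY := Yf_hasDerivAt hu ht
  have hshift : HasDerivAt (fun x : ℝ => Yf u (x+1)) (Y1 u (r+1)) r := by
    have := hY.comp r ((hasDerivAt_id r).add_const 1)
    simp at this; exact this
  exact hshift.congr_of_eventuallyEq (mm_eventuallyEq hr)

theorem deriv_mm {u r : ℝ} (hu : 0 < u) (hr : -(1:ℝ)/2 < r) :
    deriv (mm u) r = Y1 u (r+1) := (mm_hasDerivAt hu hr).deriv

theorem deriv2_mm {u r : ℝ} (hu : 0 < u) (hr : (0:ℝ) ≤ r) :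
    deriv (deriv (mm u)) r + (1/(4*(r+1)^2) - u) * mm u r = 0 := by
  have hr2 : -(1:ℝ)/2 < r := by linarith
  have ht : (0:ℝ) < r + 1 := by linarith
  obtain ⟨y2, hy2, hode⟩ := Y1_hasDerivAt hu ht
  have hshift : HasDerivAt (fun x : ℝ => Y1 u (x+1)) y2 r := by
    have := hy2.comp r ((hasDerivAt_id r).add_const 1)
    simp at this; exact this
  have heq : deriv (mm u) =ᶠ[nhds r] fun x => Y1 u (x+1) := by
    filter_upwards [isOpen_Ioi.mem_nhds (show r ∈ Ioi (-(1:ℝ)/2) from hr2)] with x hx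
    exact deriv_mm hu hx
  have h2 : deriv (deriv (mm u)) r = y2 :=
    (hshift.congr_of_eventuallyEq heq).deriv
  rw [h2, mm_eq hr2]
  exact hode

theorem mm_contDiff {u : ℝ} (hu : 0 < u) : ContDiff ℝ 2 (mm u) := by
  rw [contDiff_iff_contDiffAt]
  intro x
  have htau : ContDiffAt ℝ 2 tau x := tau_contDiff.contDiffAt
  have htp := tau_pos x
  have h1 : ContDiffAt ℝ 2 (fun r => Real.sqrt (tau r)) x :=
    (Real.contDiffAt_sqrt (ne_of_gt htp)).comp x htau
  have hw : ContDiffAt ℝ 2 (fun r => u*(tau r)^2/4) x :=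
    ((contDiffAt_const.mul (htau.pow 2)).div_const 4)
  have hwpos : 0 < u*(tau x)^2/4 := by positivity
  have hG : ContDiffAt ℝ 2 (G u) (u*(tau x)^2/4) := by
    rw [show (G u) = fun w => Aa u * ff w + Bb u * (ff w * Real.log w + hh w) from rfl]
    exact (contDiffAt_const.mul ff_contDiff.contDiffAt).add
      (contDiffAt_const.mul ((ff_contDiff.contDiffAt.mul
        (Real.contDiffAt_log.mpr (ne_of_gt hwpos))).add hh_contDiff.contDiffAt))
  exact h1.mul (by have := hG.comp x hw; exact this)

theorem mm_zero {u : ℝ} (hu : 0 < u) : mm u 0 = 0 := by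
  rw [mm_eq (by norm_num), Yf]
  rw [show u * (0+1:ℝ)^2/4 = u/4 by ring, G_w0]
  ring

theorem deriv_mm_zero {u : ℝ} (hu : 0 < u) : deriv (mm u) 0 = 1 := by
  rw [deriv_mm hu (by norm_num), Y1]
  rw [show u * (0+1:ℝ)^2/4 = u/4 by ring, G_w0, Gd_w0 hu]
  rw [zero_add, Real.sqrt_one]
  field_simp
  norm_num



noncomputable def V (u : ℝ) : ℝ :=
  Real.sqrt (2*Real.sqrt u) * (G u (1/16)/2 + Gd u (1/16)/8)

theorem Y1_at_z {u : ℝ} (hu : 0 < u) : Y1 u (1/(2*Real.sqrt u)) = V u := by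
  obtain ⟨p, hp0, rfl⟩ : ∃ p : ℝ, 0 < p ∧ u = p^2 :=
    ⟨Real.sqrt u, Real.sqrt_pos.2 hu, (Real.sq_sqrt hu.le).symm⟩
  rw [Y1, V, Real.sqrt_sq hp0.le]
  have harg : p^2 * (1/(2*p))^2/4 = 1/16 := by
    field_simp
    ring
  rw [harg]
  rw [show (1:ℝ)/(2*p) = (2*p)⁻¹ by rw [one_div], Real.sqrt_inv]
  set q := Real.sqrt (2*p) with hqdef
  have hq0 : 0 < q := Real.sqrt_pos.2 (by positivity)
  have hq2 : q^2 = 2*p := Real.sq_sqrt (by positivity)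
  have hqne : q ≠ 0 := ne_of_gt hq0
  have hpne : p ≠ 0 := ne_of_gt hp0
  field_simp
  linear_combination (-4 * Gd (p^2) (1/16)) * hq2

theorem V_quarter : V (1/4) = 1 := by
  have h1 : Real.sqrt (1/4 : ℝ) = 1/2 := by
    rw [show (1/4:ℝ) = (1/2)^2 by norm_num, Real.sqrt_sq (by norm_num : (0:ℝ) ≤ 1/2)]
  have h2 : G (1/4) (1/16) = 0 := by
    have := G_w0 (1/4)
    rw [show ((1:ℝ)/4)/4 = 1/16 by norm_num] at this
    exact this
  have h3 : Gd (1/4) (1/16) = 8 := by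
    have := Gd_w0 (show (0:ℝ) < 1/4 by norm_num)
    rw [show ((1:ℝ)/4)/4 = 1/16 by norm_num] at this
    rw [this]; norm_num
  rw [V, h1, h2, h3]
  norm_num

theorem ff_cont : Continuous ff := ff_contDiff.continuous
theorem hh_cont : Continuous hh := hh_contDiff.continuous

theorem V_continuousAt {u : ℝ} (hu : 0 < u) : ContinuousAt V u := by
  have hq : ContinuousAt (fun u : ℝ => u/4) u := by fun_prop
  have hne : u/4 ≠ 0 := by positivity
  have hlog : ContinuousAt (fun u : ℝ => Real.log (u/4)) u :=
    ContinuousAt.comp (f := fun v : ℝ => v/4) (Real.continuousAt_log hne) hq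
  have hffq : ContinuousAt (fun u : ℝ => ff (u/4)) u := ContinuousAt.comp (f := fun v : ℝ => v/4) ff_cont.continuousAt hq
  have hhhq : ContinuousAt (fun u : ℝ => hh (u/4)) u := ContinuousAt.comp (f := fun v : ℝ => v/4) hh_cont.continuousAt hq
  have hAa : ContinuousAt Aa u := by
    rw [show Aa = fun u => -(ff (u/4) * Real.log (u/4) + hh (u/4)) / 2 from rfl]
    exact (((hffq.mul hlog).add hhhq).neg).div_const 2
  have hBb : ContinuousAt Bb u := by
    rw [show Bb = fun u => ff (u/4) / 2 from rfl]
    exact hffq.div_const 2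
  have hsqrt : ContinuousAt (fun u : ℝ => Real.sqrt (2*Real.sqrt u)) u := by fun_prop
  rw [show V = fun u => Real.sqrt (2*Real.sqrt u) *
    ((Aa u * ff (1/16) + Bb u * F2 (1/16))/2 + (Aa u * fd (1/16) + Bb u * F2d (1/16))/8)
    from rfl]
  exact hsqrt.mul ((((hAa.mul continuousAt_const).add (hBb.mul continuousAt_const)).div_const 2).add
    (((hAa.mul continuousAt_const).add (hBb.mul continuousAt_const)).div_const 8))

theorem V_tendsto_zero : Tendsto V (nhdsWithin 0 (Ioi 0)) (nhds 0) := by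
  set c1 : ℝ := ff (1/16)/2 + fd (1/16)/8
  set c2 : ℝ := F2 (1/16)/2 + F2d (1/16)/8
  have hform : ∀ u : ℝ, V u =
      (-(c1/2)) * (ff (u/4) * (Real.sqrt (2*Real.sqrt u) * Real.log (u/4)))
      + (-(c1/2)) * (Real.sqrt (2*Real.sqrt u) * hh (u/4))
      + (c2/2) * (Real.sqrt (2*Real.sqrt u) * ff (u/4)) := by
    intro u
    rw [V, G, Gd, Aa, Bb, F2]
    ring
  have h1 : Tendsto (fun u : ℝ => Real.sqrt (2*Real.sqrt u)) (nhdsWithin 0 (Ioi 0)) (nhds 0) := by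
    have hc : ContinuousAt (fun u : ℝ => Real.sqrt (2*Real.sqrt u)) 0 := by fun_prop
    have h := hc.tendsto.mono_left (nhdsWithin_le_nhds (s := Ioi (0:ℝ)))
    simpa using h
  have hq : Tendsto (fun u : ℝ => u/4) (nhdsWithin 0 (Ioi 0)) (nhdsWithin 0 (Ioi 0)) := by
    apply tendsto_nhdsWithin_of_tendsto_nhds_of_eventually_within
    · have : Tendsto (fun u : ℝ => u/4) (nhds 0) (nhds 0) := by
        have := (continuous_id.div_const (4:ℝ)).tendsto (0:ℝ)
        simpa using this
      exact this.mono_left nhdsWithin_le_nhds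
    · filter_upwards [self_mem_nhdsWithin] with x hx
      exact div_pos (show (0:ℝ) < x from hx) (by norm_num)
  have hff1 : Tendsto (fun u : ℝ => ff (u/4)) (nhdsWithin 0 (Ioi 0)) (nhds 1) := by
    have := (ff_cont.continuousAt (x := 0)).tendsto.comp (hq.mono_right nhdsWithin_le_nhds)
    simp [ff_zero] at this; exact this
  have hhh0 : Tendsto (fun u : ℝ => hh (u/4)) (nhdsWithin 0 (Ioi 0)) (nhds 0) := by
    have := (hh_cont.continuousAt (x := 0)).tendsto.comp (hq.mono_right nhdsWithin_le_nhds)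
    simp [hh_zero] at this; exact this
  -- the key: sqrt(2 sqrt u) * log(u/4) → 0
  have h3 : Tendsto (fun u : ℝ => Real.sqrt (2*Real.sqrt u) * Real.log (u/4))
      (nhdsWithin 0 (Ioi 0)) (nhds 0) := by
    have hrpow : Tendsto (fun x : ℝ => Real.log x * x ^ (1/4 : ℝ)) (nhdsWithin 0 (Ioi 0)) (nhds 0) :=
      tendsto_log_mul_rpow_nhdsGT_zero (by norm_num)
    have hsqrt2 : Tendsto (fun u : ℝ => Real.sqrt 2 * (Real.log u * u ^ (1/4:ℝ)))
        (nhdsWithin 0 (Ioi 0)) (nhds 0) := by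
      have := hrpow.const_mul (Real.sqrt 2)
      simpa using this
    have hlog4 : Tendsto (fun u : ℝ => Real.sqrt (2*Real.sqrt u) * Real.log 4)
        (nhdsWithin 0 (Ioi 0)) (nhds 0) := by
      have := h1.mul_const (Real.log 4)
      simpa using this
    have heq : (fun u : ℝ => Real.sqrt (2*Real.sqrt u) * Real.log (u/4))
        =ᶠ[nhdsWithin 0 (Ioi 0)] fun u =>
          Real.sqrt 2 * (Real.log u * u ^ (1/4:ℝ)) - Real.sqrt (2*Real.sqrt u) * Real.log 4 := by
      filter_upwards [self_mem_nhdsWithin] with x (hx : 0 < x)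
      have hxs : Real.sqrt (2*Real.sqrt x) = Real.sqrt 2 * x ^ (1/4:ℝ) := by
        rw [Real.sqrt_mul (by norm_num : (0:ℝ) ≤ 2)]
        congr 1
        rw [Real.sqrt_eq_rpow, Real.sqrt_eq_rpow, ← Real.rpow_mul hx.le]
        norm_num
      rw [Real.log_div (ne_of_gt hx) (by norm_num), hxs]
      ring
    rw [tendsto_congr' heq]
    have := hsqrt2.sub hlog4
    simpa using this
  have htot := ((h3.mul hff1).const_mul (-(c1/2))).add
    (((h1.mul hhh0).const_mul (-(c1/2))).add ((h1.mul hff1).const_mul (c2/2)))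
  rw [tendsto_congr hform]
  convert htot using 2 with u
  · ring
  · norm_num

end VM

open VM in
theorem stmt_10 (s : ℝ) (hs : s ∈ Set.Ioo (0:ℝ) 1) :
    ∃ u : ℝ, u ∈ Set.Ioo (0:ℝ) (1/4) ∧ ∃ m : ℝ → ℝ,
      ContDiff ℝ 2 m ∧
      (∀ r ≥ (0:ℝ),
        deriv (deriv m) r + (1 / (4 * (r + 1) ^ 2) - u) * m r = 0) ∧
      m 0 = 0 ∧
      deriv m 0 = 1 ∧
      deriv m (1 / (2 * Real.sqrt u) - 1) = s := by
  obtain ⟨hs0, hs1⟩ := hs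
  have h1 : ∀ᶠ u in nhdsWithin 0 (Ioi (0:ℝ)), V u < s :=
    V_tendsto_zero.eventually (eventually_lt_nhds hs0)
  have h2 : Ioo (0:ℝ) (1/4) ∈ nhdsWithin 0 (Ioi (0:ℝ)) :=
    Ioo_mem_nhdsGT_of_mem (by constructor <;> norm_num)
  obtain ⟨u1, hu1lt, hu1Ioo⟩ := (h1.and (eventually_of_mem h2 (fun x hx => hx))).exists
  have hc : ContinuousOn V (Icc u1 (1/4)) := fun x hx =>
    (V_continuousAt (lt_of_lt_of_le hu1Ioo.1 hx.1)).continuousWithinAt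
  have hsub := intermediate_value_Icc (le_of_lt hu1Ioo.2) hc
  have hmem : s ∈ Icc (V u1) (V (1/4)) := by
    rw [V_quarter]; exact ⟨hu1lt.le, hs1.le⟩
  obtain ⟨u, huIcc, huV⟩ := hsub hmem
  have hu0 : 0 < u := lt_of_lt_of_le hu1Ioo.1 huIcc.1
  have hu14 : u < 1/4 := by
    rcases lt_or_eq_of_le huIcc.2 with h | h
    · exact h
    · exfalso
      rw [h, V_quarter] at huV
      exact absurd huV.symm (ne_of_lt hs1)
  have hsu0 : 0 < Real.sqrt u := Real.sqrt_pos.2 hu0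
  have hsu : Real.sqrt u < 1/2 := by
    rw [show (1:ℝ)/2 = Real.sqrt (1/4) by
      rw [show (1/4:ℝ) = (1/2)^2 by norm_num, Real.sqrt_sq]; norm_num]
    exact Real.sqrt_lt_sqrt hu0.le hu14
  have hz : -(1:ℝ)/2 < 1/(2*Real.sqrt u) - 1 := by
    have h3 : (1:ℝ) < 1/(2*Real.sqrt u) := by
      rw [lt_div_iff₀ (by positivity)]
      linarith
    linarith
  refine ⟨u, ⟨hu0, hu14⟩, mm u, mm_contDiff hu0, ?_, mm_zero hu0, deriv_mm_zero hu0, ?_⟩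
  · intro r hr
    have h := deriv2_mm hu0 hr
    convert h using 3
  · rw [deriv_mm hu0 hz, show (1/(2*Real.sqrt u) - 1) + 1 = 1/(2*Real.sqrt u) by ring,
      Y1_at_z hu0, huV]
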